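/- Let f be a normalized nondegenerate C² speed with c = f_x(0,1). The slope v of the bowl-type solution satisfies v(r) = r - c/r + o(r⁻¹) as r → ∞. -/

import Mathlib

open Filter Set

lemma flinear (f : ℝ × ℝ → ℝ) (hf : ContDiff ℝ 2 f)
    (hhom : ∀ c : ℝ, 0 < c → ∀ x y : ℝ, f (c * x, c * y) = c * f (x, y)) :
    ∀ p : ℝ × ℝ, f p = fderiv ℝ f 0 p := by
  have hdiff : Differentiable ℝ f := hf.differentiable (by norm_num)
  have hgrad : ∀ p : ℝ × ℝ, fderiv ℝ f p = fderiv ℝ f 0 := by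
    intro p
    have key : ∀ t : ℝ, 0 < t → fderiv ℝ f (t • p) = fderiv ℝ f p := by
      intro t ht
      have hfun : (fun q : ℝ × ℝ => f (t • q)) = fun q => t * f q := by
        funext q
        have := hhom t ht q.1 q.2
        simpa [Prod.smul_def] using this
      have h1 : HasFDerivAt (fun q : ℝ × ℝ => f (t • q))
          (t • fderiv ℝ f (t • p)) p := by
        have hsmul : HasFDerivAt (fun q : ℝ × ℝ => t • q)
            (t • (ContinuousLinearMap.id ℝ (ℝ × ℝ))) p := (hasFDerivAt_id p).const_smul t
        have := ((hdiff (t • p)).hasFDerivAt).comp p hsmul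
        refine this.congr_fderiv ?_
        ext q <;> simp
      have h2 : HasFDerivAt (fun q : ℝ × ℝ => t * f q) (t • fderiv ℝ f p) p :=
        ((hdiff p).hasFDerivAt).const_smul t
      rw [hfun] at h1
      have := h1.unique h2
      have ht' : t ≠ 0 := ne_of_gt ht
      exact smul_right_injective _ ht' this
    have hcont : ContinuousAt (fderiv ℝ f) 0 :=
      (hf.continuous_fderiv (by norm_num)).continuousAt
    have htend : Tendsto (fun t : ℝ => fderiv ℝ f (t • p)) (nhdsWithin 0 (Ioi 0)) (nhds (fderiv ℝ f 0)) := by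
      apply hcont.tendsto.comp
      have : Tendsto (fun t : ℝ => t • p) (nhds 0) (nhds ((0:ℝ) • p)) :=
        (continuous_id.smul continuous_const).tendsto 0
      simpa using this.mono_left nhdsWithin_le_nhds
    have htend2 : Tendsto (fun t : ℝ => fderiv ℝ f (t • p)) (nhdsWithin 0 (Ioi 0)) (nhds (fderiv ℝ f p)) := by
      apply Tendsto.congr' _ tendsto_const_nhds
      filter_upwards [self_mem_nhdsWithin] with t ht
      exact (key t ht).symm
    exact tendsto_nhds_unique htend2 htend
  have f0 : f 0 = 0 := by
    have := hhom 2 (by norm_num) 0 0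
    simp at this
    change f 0 = 2 * f 0 at this; linarith
  intro p
  have := is_const_of_fderiv_eq_zero (𝕜 := ℝ) (f := fun q => f q - fderiv ℝ f 0 q) ?_ ?_ p 0
  · simp only [f0] at this
    simp at this
    linarith [this]
  · exact hdiff.sub (fderiv ℝ f 0).differentiable
  · intro q
    rw [fderiv_fun_sub (hdiff q) ((fderiv ℝ f 0).differentiable q)]
    simp [hgrad q, (fderiv ℝ f 0).fderiv]

lemma cross_nonneg {φ φ' : ℝ → ℝ} {a B : ℝ}
    (hd : ∀ r ∈ Icc a B, HasDerivAt φ (φ' r) r)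
    (h0 : 0 ≤ φ a)
    (hcross : ∀ r ∈ Icc a B, φ r = 0 → 0 < φ' r) :
    ∀ r ∈ Icc a B, 0 ≤ φ r := by
  intro r₁ hr₁
  by_contra hneg
  push_neg at hneg
  have hsub : Icc a r₁ ⊆ Icc a B := Icc_subset_Icc le_rfl hr₁.2
  have hcont : ContinuousOn φ (Icc a r₁) := fun x hx =>
    ((hd x (hsub hx)).continuousAt).continuousWithinAt
  set S : Set ℝ := Icc a r₁ ∩ φ ⁻¹' (Ici 0) with hS
  have hSne : S.Nonempty := ⟨a, ⟨le_rfl, hr₁.1⟩, h0⟩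
  have hSbdd : BddAbove S := ⟨r₁, fun x hx => hx.1.2⟩
  have hSclosed : IsClosed S :=
    ContinuousOn.preimage_isClosed_of_isClosed hcont isClosed_Icc isClosed_Ici
  have hsmem : sSup S ∈ S := hSclosed.csSup_mem hSne hSbdd
  set s := sSup S with hs
  have hsIcc : s ∈ Icc a r₁ := hsmem.1
  have hφs : (0:ℝ) ≤ φ s := hsmem.2
  have hslt : s < r₁ := by
    rcases lt_or_eq_of_le hsIcc.2 with h | h
    · exact h
    · exfalso; rw [h] at hφs; linarith
  have key : ∀ᶠ t in nhdsWithin s (Ioi s), 0 < φ t := by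
    rcases lt_or_eq_of_le hφs with hpos | hzero
    · have hca : ContinuousAt φ s := (hd s (hsub hsIcc)).continuousAt
      have hev : ∀ᶠ t in nhds s, 0 < φ t := hca.tendsto.eventually (eventually_gt_nhds hpos)
      exact hev.filter_mono nhdsWithin_le_nhds
    · have hders : 0 < φ' s := hcross s (hsub hsIcc) hzero.symm
      have hslope : Tendsto (slope φ s) (nhdsWithin s {s}ᶜ) (nhds (φ' s)) :=
        hasDerivAt_iff_tendsto_slope.1 (hd s (hsub hsIcc))
      have hslope' : Tendsto (slope φ s) (nhdsWithin s (Ioi s)) (nhds (φ' s)) :=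
        hslope.mono_left (nhdsWithin_mono s (fun x hx => ne_of_gt hx))
      have hev : ∀ᶠ t in nhdsWithin s (Ioi s), 0 < slope φ s t :=
        hslope'.eventually (eventually_gt_nhds hders)
      filter_upwards [hev, self_mem_nhdsWithin] with t ht ht'
      rw [slope_def_field] at ht
      have hts : (0:ℝ) < t - s := sub_pos.2 ht'
      rcases div_pos_iff.1 ht with ⟨h1, _⟩ | ⟨_, h2⟩
      · linarith
      · linarith
  have hIoo : Ioo s r₁ ∈ nhdsWithin s (Ioi s) :=
    Ioo_mem_nhdsGT_of_mem ⟨le_rfl, hslt⟩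
  obtain ⟨t, htpos, htIoo⟩ := (key.and (eventually_of_mem hIoo (fun t ht => ht))).exists
  have htS : t ∈ S := ⟨⟨le_trans hsIcc.1 (le_of_lt htIoo.1), le_of_lt htIoo.2⟩, le_of_lt htpos⟩
  have : t ≤ s := le_csSup hSbdd htS
  linarith [htIoo.1]

lemma cross_nonneg_Ici {φ φ' : ℝ → ℝ} {a : ℝ}
    (hd : ∀ r ∈ Ici a, HasDerivAt φ (φ' r) r)
    (h0 : 0 ≤ φ a)
    (hcross : ∀ r ∈ Ici a, φ r = 0 → 0 < φ' r) :
    ∀ r ∈ Ici a, 0 ≤ φ r := by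
  intro r hr
  exact cross_nonneg (fun x hx => hd x hx.1) h0
    (fun x hx hx0 => hcross x hx.1 hx0) r ⟨hr, le_rfl⟩

lemma decay_Icc {φ φ' : ℝ → ℝ} {a B δ : ℝ} (hδ : 0 < δ)
    (hd : ∀ r ∈ Icc a B, HasDerivAt φ (φ' r) r)
    (hneg : ∀ r ∈ Icc a B, φ' r ≤ -δ) :
    ∀ r ∈ Icc a B, φ r ≤ φ a - δ / 2 * (r - a) := by
  have key := cross_nonneg (φ := fun s => φ a - δ / 2 * (s - a) - φ s)
      (φ' := fun s => -(δ / 2) - φ' s)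
      (fun r hr => by
        have h1 : HasDerivAt (fun s : ℝ => φ a - δ / 2 * (s - a)) (-(δ / 2)) r := by
          have := ((hasDerivAt_id r).sub_const a).const_mul (δ / 2)
          simpa using (this.const_sub (φ a))
        exact h1.sub (hd r hr))
      (by simp)
      (fun r hr _ => by have := hneg r hr; linarith)
  intro r hr
  have := key r hr
  linarith

lemma grow_Icc {φ φ' : ℝ → ℝ} {a B δ : ℝ} (hδ : 0 < δ)
    (hd : ∀ r ∈ Icc a B, HasDerivAt φ (φ' r) r)
    (hpos : ∀ r ∈ Icc a B, δ ≤ φ' r) :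
    ∀ r ∈ Icc a B, φ a + δ / 2 * (r - a) ≤ φ r := by
  have := decay_Icc (φ := fun s => -φ s) (φ' := fun s => -φ' s) hδ
    (fun r hr => (hd r hr).neg) (fun r hr => by have := hpos r hr; linarith)
  intro r hr
  have h := this r hr
  linarith

lemma decay_Ici {φ φ' : ℝ → ℝ} {a δ : ℝ} (hδ : 0 < δ)
    (hd : ∀ r ∈ Ici a, HasDerivAt φ (φ' r) r)
    (hneg : ∀ r ∈ Ici a, φ' r ≤ -δ) :
    ∀ r ∈ Ici a, φ r ≤ φ a - δ / 2 * (r - a) := fun r hr =>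
  decay_Icc hδ (fun x hx => hd x hx.1) (fun x hx => hneg x hx.1) r ⟨hr, le_rfl⟩

lemma grow_Ici {φ φ' : ℝ → ℝ} {a δ : ℝ} (hδ : 0 < δ)
    (hd : ∀ r ∈ Ici a, HasDerivAt φ (φ' r) r)
    (hpos : ∀ r ∈ Ici a, δ ≤ φ' r) :
    ∀ r ∈ Ici a, φ a + δ / 2 * (r - a) ≤ φ r := fun r hr =>
  grow_Icc hδ (fun x hx => hd x hx.1) (fun x hx => hpos x hx.1) r ⟨hr, le_rfl⟩

lemma L1 {c : ℝ} {v dv : ℝ → ℝ} (hcpos : 0 < c)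
    (hvpos : ∀ r : ℝ, 0 < r → 0 < v r)
    (hder : ∀ r : ℝ, 0 < r → HasDerivAt v (dv r) r)
    (hdv : ∀ r : ℝ, 0 < r → dv r = (1 + (v r)^2) * (r - v r) / (c * r)) :
    ∃ R : ℝ, 1 ≤ R ∧ ∀ r ∈ Ici R, v r ≤ r := by
  -- entry point
  have entry : ∃ r₀ : ℝ, 1 ≤ r₀ ∧ v r₀ ≤ r₀ := by
    by_contra h
    push_neg at h
    have hbig : ∀ r ∈ Ici (1:ℝ), r < v r := fun r hr => h r hr
    have hd : ∀ r ∈ Ici (1:ℝ), HasDerivAt (fun s => s - v s) (1 - dv r) r := fun r hr =>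
      (hasDerivAt_id r).sub (hder r (lt_of_lt_of_le one_pos hr))
    have hgrow := grow_Ici (δ := 1) one_pos hd (fun r hr => by
      have hr0 : (0:ℝ) < r := lt_of_lt_of_le one_pos hr
      have hdvle : dv r ≤ 0 := by
        rw [hdv r hr0]
        apply div_nonpos_of_nonpos_of_nonneg
        · have h1 : (0:ℝ) ≤ 1 + (v r)^2 := by positivity
          have h2 : r - v r ≤ 0 := by linarith [hbig r hr]
          exact mul_nonpos_of_nonneg_of_nonpos h1 h2
        · positivity
      linarith)
    set r₂ := 2 * v 1 + 1 with hr₂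
    have hv1 : (1:ℝ) < v 1 := hbig 1 (by simp)
    have hr₂mem : r₂ ∈ Ici (1:ℝ) := by simp only [mem_Ici, hr₂]; linarith
    have := hgrow r₂ hr₂mem
    have hlt := hbig r₂ hr₂mem
    rw [hr₂] at this hlt
    linarith
  obtain ⟨r₀, hr₀1, hr₀v⟩ := entry
  refine ⟨r₀, hr₀1, ?_⟩
  have key := cross_nonneg_Ici (φ := fun r => r - v r) (φ' := fun r => 1 - dv r)
    (fun r hr => (hasDerivAt_id r).sub (hder r (lt_of_lt_of_le one_pos (le_trans hr₀1 hr))))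
    (by linarith)
    (fun r hr h0 => by
      have hr0 : (0:ℝ) < r := lt_of_lt_of_le one_pos (le_trans hr₀1 hr)
      have hvr : v r = r := by linarith
      have : dv r = 0 := by rw [hdv r hr0, hvr]; simp
      simp only [this]; linarith)
  intro r hr
  have := key r hr
  linarith

lemma L2 {c : ℝ} {v dv : ℝ → ℝ} (hcpos : 0 < c)
    (hvpos : ∀ r : ℝ, 0 < r → 0 < v r)
    (hder : ∀ r : ℝ, 0 < r → HasDerivAt v (dv r) r)
    (hdv : ∀ r : ℝ, 0 < r → dv r = (1 + (v r)^2) * (r - v r) / (c * r))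
    {R₁ : ℝ} (hR₁ : 1 ≤ R₁) (hle : ∀ r ∈ Ici R₁, v r ≤ r) :
    ∃ R : ℝ, R₁ ≤ R ∧ ∀ r ∈ Ici R, r / 2 ≤ v r := by
  set R₀ := max R₁ (2 * c + 2) with hR₀
  have hR₀1 : R₁ ≤ R₀ := le_max_left _ _
  have hR₀c : 2 * c + 2 ≤ R₀ := le_max_right _ _
  have hR₀pos : 0 < R₀ := by linarith
  -- entry
  have entry : ∃ r₁ ∈ Icc R₀ (R₀ + 8 * c), r₁ / 2 ≤ v r₁ := by
    by_contra h
    push_neg at h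
    have hsmall : ∀ r ∈ Icc R₀ (R₀ + 8 * c), v r < r / 2 := fun r hr => h r hr
    have hd : ∀ r ∈ Icc R₀ (R₀ + 8 * c),
        HasDerivAt (fun s => Real.arctan (v s)) (1 / (1 + (v r)^2) * dv r) r := by
      intro r hr
      have hr0 : 0 < r := lt_of_lt_of_le hR₀pos hr.1
      exact (Real.hasDerivAt_arctan (v r)).comp r (hder r hr0)
    have hgrow := grow_Icc (δ := 1 / (2 * c)) (by positivity) hd (fun r hr => by
      have hr0 : 0 < r := lt_of_lt_of_le hR₀pos hr.1
      have hv2 : (0:ℝ) < 1 + (v r)^2 := by positivity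
      have heq : 1 / (1 + (v r)^2) * dv r = (r - v r) / (c * r) := by
        rw [hdv r hr0]; field_simp
      rw [heq, div_le_div_iff₀ (by positivity) (by positivity)]
      have := hsmall r hr
      nlinarith)
    have hB : R₀ + 8 * c ∈ Icc R₀ (R₀ + 8 * c) := by constructor <;> simp <;> linarith
    have hkey := hgrow (R₀ + 8 * c) hB
    have h1 : Real.arctan (v (R₀ + 8 * c)) < Real.pi / 2 := Real.arctan_lt_pi_div_two _
    have h2 : 0 < Real.arctan (v R₀) := by
      rw [← Real.arctan_zero]
      exact Real.arctan_strictMono (hvpos R₀ hR₀pos)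
    have hpi : Real.pi < 3.15 := Real.pi_lt_d2
    have : 1 / (2 * c) / 2 * (R₀ + 8 * c - R₀) = 2 := by field_simp; ring
    rw [this] at hkey
    linarith
  obtain ⟨r₁, hr₁mem, hr₁v⟩ := entry
  have hr₁R₀ : R₀ ≤ r₁ := hr₁mem.1
  have hr₁pos : 0 < r₁ := lt_of_lt_of_le hR₀pos hr₁R₀
  refine ⟨r₁, le_trans hR₀1 hr₁R₀, ?_⟩
  have key := cross_nonneg_Ici (φ := fun r => v r - r / 2) (φ' := fun r => dv r - 1 / 2)
    (fun r hr => ((hder r (lt_of_lt_of_le hr₁pos hr)).sub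
      (((hasDerivAt_id r).div_const 2))))
    (by linarith)
    (fun r hr h0 => by
      have hrr : r₁ ≤ r := hr
      have hr0 : 0 < r := lt_of_lt_of_le hr₁pos hrr
      have hvr : v r = r / 2 := by linarith
      have hrc : 2 * c + 2 ≤ r := le_trans hR₀c (le_trans hr₁R₀ hrr)
      have hdveq : dv r = (1 + (r / 2)^2) * (r / 2) / (c * r) := by
        rw [hdv r hr0, hvr]; ring_nf
      simp only [hdveq]
      have hgt : 1/2 < (1 + (r/2)^2) * (r/2) / (c * r) := by
        rw [lt_div_iff₀ (by positivity)]
        nlinarith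
      linarith)
  intro r hr
  have := key r hr
  linarith

lemma L3 {c : ℝ} {v dv : ℝ → ℝ} (hcpos : 0 < c)
    (hvpos : ∀ r : ℝ, 0 < r → 0 < v r)
    (hder : ∀ r : ℝ, 0 < r → HasDerivAt v (dv r) r)
    (hdv : ∀ r : ℝ, 0 < r → dv r = (1 + (v r)^2) * (r - v r) / (c * r))
    {R₂ : ℝ} (hR₂ : 1 ≤ R₂) (hle : ∀ r ∈ Ici R₂, v r ≤ r)
    (hge : ∀ r ∈ Ici R₂, r / 2 ≤ v r) :
    ∃ R : ℝ, R₂ ≤ R ∧ ∀ r ∈ Ici R, r - 8 * c / r ≤ v r := by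
  set R₃ := max R₂ (16 * c + 16) with hR₃def
  have hR₃a : R₂ ≤ R₃ := le_max_left _ _
  have hR₃b : 16 * c + 16 ≤ R₃ := le_max_right _ _
  have hR₃pos : 0 < R₃ := by linarith
  have hmem : ∀ r : ℝ, r ∈ Ici R₃ → (0 < r ∧ R₂ ≤ r ∧ 16 * c + 16 ≤ r) := fun r hr =>
    ⟨lt_of_lt_of_le hR₃pos hr, le_trans hR₃a hr, le_trans hR₃b hr⟩
  have entry : ∃ r₀ ∈ Ici R₃, r₀ - 8 * c / r₀ ≤ v r₀ := by
    by_contra h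
    push_neg at h
    have hu : ∀ r ∈ Ici R₃, 8 * c / r < r - v r := by
      intro r hr; have := h r hr; linarith
    have hd : ∀ r ∈ Ici R₃, HasDerivAt (fun s => s - v s) (1 - dv r) r := fun r hr =>
      (hasDerivAt_id r).sub (hder r (hmem r hr).1)
    have hdecay := decay_Ici (δ := 1) one_pos hd (fun r hr => by
      obtain ⟨hr0, hrR₂, hrc⟩ := hmem r hr
      have h2 : 2 ≤ dv r := by
        rw [hdv r hr0, le_div_iff₀ (by positivity : (0:ℝ) < c * r)]
        have hv2 : r / 2 ≤ v r := hge r hrR₂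
        have ha : r^2/4 ≤ 1 + (v r)^2 := by nlinarith
        have hmul : (r^2/4) * (8*c/r) ≤ (1 + (v r)^2) * (r - v r) :=
          mul_le_mul ha (le_of_lt (hu r hr)) (by positivity) (by positivity)
        have hsimp : (r^2/4) * (8*c/r) = 2*(c*r) := by field_simp; ring
        linarith
      linarith)
    set r₄ := R₃ + 2*(R₃ - v R₃) + 2 with hr₄def
    have hvR₃ : v R₃ ≤ R₃ := hle R₃ hR₃a
    have hr₄mem : r₄ ∈ Ici R₃ := by simp only [mem_Ici, hr₄def]; linarith
    have hd1 := hdecay r₄ hr₄mem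
    have hd2 := hu r₄ hr₄mem
    have hd3 : (0:ℝ) < 8*c/r₄ := by
      have : (0:ℝ) < r₄ := lt_of_lt_of_le hR₃pos hr₄mem
      positivity
    rw [hr₄def] at hd1
    linarith
  obtain ⟨r₀, hr₀mem, hr₀v⟩ := entry
  have hr₀pos : 0 < r₀ := (hmem r₀ hr₀mem).1
  refine ⟨r₀, le_trans hR₃a hr₀mem, ?_⟩
  have key := cross_nonneg_Ici (φ := fun r => v r - r + 8*c * r⁻¹)
    (φ' := fun r => dv r - 1 + 8*c * -(r^2)⁻¹)
    (fun r hr => by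
      have hr0 : 0 < r := lt_of_lt_of_le hr₀pos hr
      exact ((hder r hr0).sub (hasDerivAt_id r)).add
        ((hasDerivAt_inv hr0.ne').const_mul (8*c)))
    (by rw [← div_eq_mul_inv]; linarith)
    (fun r hr h0 => by
      have hrge : r₀ ≤ r := hr
      obtain ⟨hr0, hrR₂, hrc⟩ := hmem r (le_trans hr₀mem hrge)
      have hvr : v r = r - 8*c/r := by
        rw [← div_eq_mul_inv] at h0; linarith
      have heq : dv r - 1 + 8*c * -(r^2)⁻¹ = 7 + (8 - 136*c)/r^2 + 512*c^2/r^4 := by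
        rw [hdv r hr0, hvr]; field_simp; ring
      simp only [heq]
      have hr136 : 136*c ≤ r^2 := by nlinarith
      have h1 : -(1:ℝ) ≤ (8 - 136*c)/r^2 := by
        rw [le_div_iff₀ (by positivity : (0:ℝ) < r^2)]; linarith
      have h2 : (0:ℝ) ≤ 512*c^2/r^4 := by positivity
      linarith)
  intro r hr
  have := key r hr
  rw [← div_eq_mul_inv] at this
  linarith

set_option maxHeartbeats 1000000 in
lemma L4 {c ε : ℝ} {v dv : ℝ → ℝ} (hcpos : 0 < c) (hε : 0 < ε) (hεc : ε ≤ c)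
    (hvpos : ∀ r : ℝ, 0 < r → 0 < v r)
    (hder : ∀ r : ℝ, 0 < r → HasDerivAt v (dv r) r)
    (hdv : ∀ r : ℝ, 0 < r → dv r = (1 + (v r)^2) * (r - v r) / (c * r))
    {R₃ : ℝ} (hR₃ : 1 ≤ R₃) (hle : ∀ r ∈ Ici R₃, v r ≤ r)
    (hK : ∀ r ∈ Ici R₃, r - 8 * c / r ≤ v r) :
    ∃ R : ℝ, R₃ ≤ R ∧ ∀ r ∈ Ici R, r - (c + ε) / r ≤ v r := by
  obtain ⟨b, hbdef⟩ : ∃ b : ℝ, b = c + ε := ⟨_, rfl⟩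
  have hbpos : 0 < b := by linarith
  have hb2c : b ≤ 2 * c := by linarith
  obtain ⟨R₄, hR₄a, hR₄b⟩ : ∃ R₄ : ℝ, R₃ ≤ R₄ ∧ 64 * c^2 / ε + 16 * c + 17 ≤ R₄ :=
    ⟨max R₃ (64 * c^2 / ε + 16 * c + 17), le_max_left _ _, le_max_right _ _⟩
  have hR₄1 : 1 ≤ R₄ := le_trans hR₃ hR₄a
  have hR₄pos : 0 < R₄ := by linarith
  have hmem : ∀ r : ℝ, r ∈ Ici R₄ →
      (0 < r ∧ R₃ ≤ r ∧ 1 ≤ r ∧ 64 * c^2 / ε + 16 * c + 17 ≤ r) := fun r hr =>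
    ⟨lt_of_lt_of_le hR₄pos hr, le_trans hR₄a hr, le_trans hR₄1 hr, le_trans hR₄b hr⟩
  -- key fact: 32 b c ≤ ε r²
  have hfact : ∀ r ∈ Ici R₄, 32 * b * c ≤ ε * r^2 := by
    intro r hr
    obtain ⟨hr0, -, hr1, hr64⟩ := hmem r hr
    have h1 : 64 * c^2 / ε ≤ r := by linarith
    have h2 : 64 * c^2 ≤ ε * r := by
      have := mul_le_mul_of_nonneg_left h1 hε.le
      calc 64 * c^2 = ε * (64 * c^2 / ε) := by field_simp
        _ ≤ ε * r := this
    have h3 : ε * r ≤ ε * r^2 := by nlinarith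
    nlinarith
  -- key derivative bound
  have hkeydv : ∀ r ∈ Ici R₄, b / r ≤ r - v r → 1 + ε / (2*c) ≤ dv r := by
    intro r hr hu
    obtain ⟨hr0, hrR₃, hr1, hr64⟩ := hmem r hr
    have h64nn : (0:ℝ) ≤ 64 * c^2 / ε := by positivity
    have hr16 : 16*c + 17 ≤ r := by linarith
    have hrr : r ≤ r^2 := by nlinarith
    rw [hdv r hr0, le_div_iff₀ (by positivity : (0:ℝ) < c * r)]
    have hv0 : 0 ≤ v r := (hvpos r hr0).le
    have hvlow : r - 8*c/r ≤ v r := hK r hrR₃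
    have h8c : 0 ≤ r - 8*c/r := by
      rw [sub_nonneg, div_le_iff₀ hr0]
      nlinarith [hrr, hr16]
    have hsq0 : (r - 8*c/r)^2 ≤ (v r)^2 := pow_le_pow_left₀ h8c hvlow 2
    have hsqeq : (r - 8*c/r)^2 = r^2 - 16*c + (8*c/r)^2 := by field_simp; ring
    rw [hsqeq] at hsq0
    have hsq : 1 + r^2 - 16*c ≤ 1 + (v r)^2 := by
      have := sq_nonneg (8*c/r); linarith
    have hXnn : (0:ℝ) ≤ 1 + r^2 - 16*c := by nlinarith [hrr, hr16]
    have hmul : (1 + r^2 - 16*c) * (b/r) ≤ (1 + (v r)^2) * (r - v r) :=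
      mul_le_mul hsq hu (by positivity) (by positivity)
    have hstep : (1 + ε/(2*c)) * (c*r) ≤ (1 + r^2 - 16*c) * (b/r) := by
      rw [mul_div_assoc', le_div_iff₀ hr0]
      have hlhs : (1 + ε/(2*c)) * (c*r) * r = c*r^2 + ε*r^2/2 := by field_simp
      rw [hlhs]
      have h32 := hfact r hr
      have hexp : (1 + r^2 - 16*c) * b = b + b*r^2 - 16*b*c := by ring
      rw [hexp]
      have hb' : b*r^2 = c*r^2 + ε*r^2 := by rw [hbdef]; ring
      linarith [h32, hb', hbpos]
    linarith
  -- entry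
  have entry : ∃ r₀ ∈ Ici R₄, r₀ - b / r₀ ≤ v r₀ := by
    by_contra h
    push_neg at h
    have hu : ∀ r ∈ Ici R₄, b / r ≤ r - v r := by
      intro r hr; have := h r hr; linarith
    have hd : ∀ r ∈ Ici R₄, HasDerivAt (fun s => s - v s) (1 - dv r) r := fun r hr =>
      (hasDerivAt_id r).sub (hder r (hmem r hr).1)
    have hdecay := decay_Ici (δ := ε/(2*c)) (by positivity) hd (fun r hr => by
      have := hkeydv r hr (hu r hr); linarith)
    set r₄ := R₄ + (4*c/ε) * (R₄ - v R₄) + 1 with hr₄def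
    have hvR₄ : v R₄ ≤ R₄ := hle R₄ hR₄a
    have hr₄mem : r₄ ∈ Ici R₄ := by
      have : 0 ≤ (4*c/ε) * (R₄ - v R₄) := mul_nonneg (by positivity) (by linarith)
      simp only [mem_Ici, hr₄def]; linarith
    have hd1 := hdecay r₄ hr₄mem
    have hd2 := hu r₄ hr₄mem
    have hr₄pos : 0 < r₄ := lt_of_lt_of_le hR₄pos hr₄mem
    have hd3 : (0:ℝ) < b/r₄ := by positivity
    have hcomp : ε/(2*c)/2 * (r₄ - R₄) = (R₄ - v R₄) + ε/(4*c) := by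
      rw [hr₄def]; field_simp; ring
    rw [hcomp] at hd1
    have : (0:ℝ) < ε/(4*c) := by positivity
    linarith
  obtain ⟨r₀, hr₀mem, hr₀v⟩ := entry
  have hr₀pos : 0 < r₀ := (hmem r₀ hr₀mem).1
  refine ⟨r₀, le_trans hR₄a hr₀mem, ?_⟩
  have key := cross_nonneg_Ici (φ := fun r => v r - r + b * r⁻¹)
    (φ' := fun r => dv r - 1 + b * -(r^2)⁻¹)
    (fun r hr => by
      have hr0 : 0 < r := lt_of_lt_of_le hr₀pos hr
      exact ((hder r hr0).sub (hasDerivAt_id r)).add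
        ((hasDerivAt_inv hr0.ne').const_mul b))
    (by rw [← div_eq_mul_inv]; linarith)
    (fun r hr h0 => by
      have hrmem : r ∈ Ici R₄ := mem_Ici.2 (le_trans (mem_Ici.1 hr₀mem) (mem_Ici.1 hr))
      obtain ⟨hr0, hrR₃, hr1, hr64⟩ := hmem r hrmem
      have hvr : b / r ≤ r - v r := by
        rw [← div_eq_mul_inv] at h0; linarith
      have hdvlow := hkeydv r hrmem hvr
      have hbr : b * -(r^2)⁻¹ = -(b/r^2) := by rw [mul_neg, ← div_eq_mul_inv]
      simp only [hbr]
      have hsmall : b/r^2 < ε/(2*c) := by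
        rw [div_lt_div_iff₀ (by positivity) (by positivity)]
        nlinarith [hfact r hrmem, mul_pos hbpos hcpos]
      linarith)
  intro r hr
  rw [← hbdef]
  have := key r hr
  rw [← div_eq_mul_inv] at this
  linarith

set_option maxHeartbeats 1000000 in
lemma L5 {c ε : ℝ} {v dv : ℝ → ℝ} (hcpos : 0 < c) (hε : 0 < ε) (hεc : ε < c)
    (hvpos : ∀ r : ℝ, 0 < r → 0 < v r)
    (hder : ∀ r : ℝ, 0 < r → HasDerivAt v (dv r) r)
    (hdv : ∀ r : ℝ, 0 < r → dv r = (1 + (v r)^2) * (r - v r) / (c * r))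
    {R₁ : ℝ} (hR₁ : 1 ≤ R₁) (hle : ∀ r ∈ Ici R₁, v r ≤ r) :
    ∃ R : ℝ, R₁ ≤ R ∧ ∀ r ∈ Ici R, v r ≤ r - (c - ε) / r := by
  obtain ⟨b, hbdef⟩ : ∃ b : ℝ, b = c - ε := ⟨_, rfl⟩
  have hbpos : 0 < b := by rw [hbdef]; linarith
  have hbc : b < c := by rw [hbdef]; linarith
  obtain ⟨R₅, hR₅a, hR₅b⟩ : ∃ R₅ : ℝ, R₁ ≤ R₅ ∧ 2 * c / ε + 1 ≤ R₅ :=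
    ⟨max R₁ (2 * c / ε + 1), le_max_left _ _, le_max_right _ _⟩
  have hR₅1 : 1 ≤ R₅ := le_trans hR₁ hR₅a
  have hR₅pos : 0 < R₅ := by linarith
  have hmem : ∀ r : ℝ, r ∈ Ici R₅ → (0 < r ∧ R₁ ≤ r ∧ 1 ≤ r ∧ 2 * c / ε + 1 ≤ r) := fun r hr =>
    ⟨lt_of_lt_of_le hR₅pos hr, le_trans hR₅a hr, le_trans hR₅1 hr, le_trans hR₅b hr⟩
  -- key: derivative upper bound when u ≤ b/r
  have hkeydv : ∀ r ∈ Ici R₅, r - v r ≤ b / r → dv r ≤ 1 - ε / (2*c) := by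
    intro r hr hu
    obtain ⟨hr0, hrR₁, hr1, hr2c⟩ := hmem r hr
    have hv0 : 0 ≤ v r := (hvpos r hr0).le
    have hvler : v r ≤ r := hle r hrR₁
    have hunn : 0 ≤ r - v r := by linarith
    have hsq : 1 + (v r)^2 ≤ 1 + r^2 := by nlinarith
    rw [hdv r hr0, div_le_iff₀ (by positivity : (0:ℝ) < c * r)]
    have hmul : (1 + (v r)^2) * (r - v r) ≤ (1 + r^2) * (b/r) :=
      mul_le_mul hsq hu hunn (by positivity)
    have hstep : (1 + r^2) * (b/r) ≤ (1 - ε/(2*c)) * (c*r) := by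
      rw [mul_div_assoc', div_le_iff₀ hr0]
      have hrhs : (1 - ε/(2*c)) * (c*r) * r = c*r^2 - ε*r^2/2 := by field_simp
      rw [hrhs]
      -- (1+r²)b = b + br² ≤ cr² - εr²/2  ⇔  b + εr²/2 ≤ cr² - br² = εr²
      -- need b ≤ εr²/2 : from r ≥ 2c/ε + 1 : εr² ≥ εr ≥ 2c ≥ 2b
      have h1 : 2 * c / ε ≤ r := by linarith
      have h2 : 2 * c ≤ ε * r := by
        calc 2 * c = ε * (2 * c / ε) := by field_simp
          _ ≤ ε * r := mul_le_mul_of_nonneg_left h1 hε.le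
      have h3 : ε * r ≤ ε * r^2 := by nlinarith
      have hexp : (1 + r^2) * b = b + b * r^2 := by ring
      rw [hexp]
      have hb' : b * r^2 = c * r^2 - ε * r^2 := by rw [hbdef]; ring
      linarith [hb', h2, h3, hbpos, hbc]
    linarith
  -- entry
  have entry : ∃ r₀ ∈ Ici R₅, b / r₀ ≤ r₀ - v r₀ := by
    by_contra h
    push_neg at h
    have hu : ∀ r ∈ Ici R₅, r - v r ≤ b / r := by
      intro r hr; have := h r hr; linarith
    have hd : ∀ r ∈ Ici R₅, HasDerivAt (fun s => s - v s) (1 - dv r) r := fun r hr =>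
      (hasDerivAt_id r).sub (hder r (hmem r hr).1)
    have hgrow := grow_Ici (δ := ε/(2*c)) (by positivity) hd (fun r hr => by
      have := hkeydv r hr (hu r hr); linarith)
    set r₄ := R₅ + (4*c/ε) * (b/R₅ + 1) with hr₄def
    have haux : 0 < (4*c/ε) * (b/R₅ + 1) := by positivity
    have hr₄mem : r₄ ∈ Ici R₅ := by simp only [mem_Ici, hr₄def]; linarith
    have hr₄pos : 0 < r₄ := lt_of_lt_of_le hR₅pos hr₄mem
    have hg1 := hgrow r₄ hr₄mem
    have hg2 := hu r₄ hr₄mem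
    have huR₅ : 0 ≤ R₅ - v R₅ := by linarith [hle R₅ hR₅a]
    have hcomp : ε/(2*c)/2 * (r₄ - R₅) = b/R₅ + 1 := by
      rw [hr₄def]; field_simp; ring
    rw [hcomp] at hg1
    have hbr : b/r₄ ≤ b/R₅ := by
      apply div_le_div_of_nonneg_left hbpos.le hR₅pos hr₄mem
    linarith
  obtain ⟨r₀, hr₀mem, hr₀v⟩ := entry
  have hr₀pos : 0 < r₀ := (hmem r₀ hr₀mem).1
  refine ⟨r₀, le_trans hR₅a hr₀mem, ?_⟩
  have key := cross_nonneg_Ici (φ := fun r => r - b * r⁻¹ - v r)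
    (φ' := fun r => 1 - b * -(r^2)⁻¹ - dv r)
    (fun r hr => by
      have hr0 : 0 < r := lt_of_lt_of_le hr₀pos hr
      exact (((hasDerivAt_id r).sub ((hasDerivAt_inv hr0.ne').const_mul b)).sub
        (hder r hr0)))
    (by rw [← div_eq_mul_inv]; linarith)
    (fun r hr h0 => by
      have hrmem : r ∈ Ici R₅ := mem_Ici.2 (le_trans (mem_Ici.1 hr₀mem) (mem_Ici.1 hr))
      obtain ⟨hr0, hrR₁, hr1, hr2c⟩ := hmem r hrmem
      have hvr : r - v r ≤ b / r := by
        rw [← div_eq_mul_inv] at h0; linarith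
      have hdvhi := hkeydv r hrmem hvr
      have hbr : b * -(r^2)⁻¹ = -(b/r^2) := by rw [mul_neg, ← div_eq_mul_inv]
      simp only [hbr]
      have hpos2 : (0:ℝ) < b/r^2 := by positivity
      have hpos3 : (0:ℝ) < ε/(2*c) := by positivity
      linarith)
  intro r hr
  rw [← hbdef]
  have := key r hr
  rw [← div_eq_mul_inv] at this
  linarith

theorem stmt9 (f : ℝ × ℝ → ℝ)
    (hf : ContDiff ℝ 2 f)
    (hhom : ∀ c : ℝ, 0 < c → ∀ x y : ℝ, f (c * x, c * y) = c * f (x, y))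
    (hfx : ∀ p : ℝ × ℝ, 0 < deriv (fun t => f (t, p.2)) p.1)
    (hfy : ∀ p : ℝ × ℝ, 0 < deriv (fun t => f (p.1, t)) p.2)
    (hnorm : f (0, 1) = 1)
    (c : ℝ) (hc : c = deriv (fun t => f (t, 1)) 0)
    (v dv : ℝ → ℝ) (hv0 : v 0 = 0)
    (hvpos : ∀ r : ℝ, 0 < r → 0 < v r)
    (hode : ∀ r : ℝ, 0 < r → HasDerivAt v (dv r) r ∧
      f (dv r / (1 + (v r) ^ 2), v r / r) = 1) :
    (fun r : ℝ => v r - (r - c / r)) =o[atTop] (fun r : ℝ => r⁻¹) := by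
  have hLp := flinear f hf hhom
  set L := fderiv ℝ f 0 with hL
  -- decompose L
  have hsplit : ∀ x y : ℝ, L (x, y) = x * L (1, 0) + y * L (0, 1) := by
    intro x y
    have : ((x, y) : ℝ × ℝ) = x • ((1:ℝ), (0:ℝ)) + y • ((0:ℝ), (1:ℝ)) := by
      simp [Prod.ext_iff]
    rw [this, map_add, map_smul, map_smul]
    simp [smul_eq_mul]
  have hL01 : L (0, 1) = 1 := by rw [← hLp (0, 1)]; exact hnorm
  have hlin : ∀ x y : ℝ, f (x, y) = L (1, 0) * x + y := by
    intro x y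
    rw [hLp (x, y), hsplit x y, hL01]
    ring
  have hca : c = L (1, 0) := by
    rw [hc]
    have hfun : (fun t : ℝ => f (t, 1)) = fun t => L (1, 0) * t + 1 := by
      funext t; rw [hlin t 1]
    rw [hfun]
    have : HasDerivAt (fun t : ℝ => L (1, 0) * t + 1) (L (1, 0)) 0 := by
      simpa using ((hasDerivAt_id (0:ℝ)).const_mul (L (1, 0))).add_const 1
    exact this.deriv.symm ▸ rfl
  have hcpos : 0 < c := by
    have h := hfx ((0 : ℝ), (1 : ℝ))
    simp only at h
    rw [hc]; exact h
  -- ODE in explicit form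
  have hder : ∀ r : ℝ, 0 < r → HasDerivAt v (dv r) r := fun r hr => (hode r hr).1
  have hdv : ∀ r : ℝ, 0 < r → dv r = (1 + (v r)^2) * (r - v r) / (c * r) := by
    intro r hr
    have heq := (hode r hr).2
    rw [hlin] at heq
    rw [← hca] at heq
    have hq : (0:ℝ) < 1 + (v r)^2 := by positivity
    rw [eq_div_iff (by positivity : c * r ≠ 0)]
    field_simp at heq
    linarith [heq]
  -- chain of barriers
  obtain ⟨R₁, hR₁1, hle1⟩ := L1 hcpos hvpos hder hdv
  obtain ⟨R₂, hR₂a, hge2⟩ := L2 hcpos hvpos hder hdv hR₁1 hle1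
  have hR₂1 : 1 ≤ R₂ := le_trans hR₁1 hR₂a
  have hle2 : ∀ r ∈ Ici R₂, v r ≤ r := fun r hr => hle1 r (le_trans hR₂a hr)
  obtain ⟨R₃, hR₃a, hK3⟩ := L3 hcpos hvpos hder hdv hR₂1 hle2 hge2
  have hR₃1 : 1 ≤ R₃ := le_trans hR₂1 hR₃a
  have hle3 : ∀ r ∈ Ici R₃, v r ≤ r := fun r hr => hle2 r (le_trans hR₃a hr)
  rw [Asymptotics.isLittleO_iff]
  intro ε₀ hε₀
  obtain ⟨ε, hε, hεc, hεε₀⟩ : ∃ ε : ℝ, 0 < ε ∧ ε < c ∧ ε ≤ ε₀ :=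
    ⟨min ε₀ c / 2, by have h := lt_min hε₀ hcpos; linarith,
      by have h := min_le_right ε₀ c; linarith,
      by have h := min_le_left ε₀ c; linarith⟩
  obtain ⟨Ra, hRa, hlow⟩ := L4 hcpos hε (le_of_lt hεc) hvpos hder hdv hR₃1 hle3 hK3
  obtain ⟨Rb, hRb, hhigh⟩ := L5 hcpos hε hεc hvpos hder hdv hR₁1 hle1
  rw [eventually_atTop]
  refine ⟨max Ra Rb, fun r hr => ?_⟩
  have hra : Ra ≤ r := le_trans (le_max_left _ _) hr
  have hrb : Rb ≤ r := le_trans (le_max_right _ _) hr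
  have hr0 : 0 < r := lt_of_lt_of_le (by linarith : (0:ℝ) < Ra) hra
  have h1 := hlow r hra
  have h2 := hhigh r hrb
  have e1 : (c + ε)/r = c/r + ε/r := add_div _ _ _
  have e2 : (c - ε)/r = c/r - ε/r := sub_div _ _ _
  have habs : |v r - (r - c/r)| ≤ ε/r := by
    rw [abs_le]; constructor <;> linarith
  rw [Real.norm_eq_abs, Real.norm_eq_abs]
  have hai : |r⁻¹| = r⁻¹ := abs_of_pos (inv_pos.2 hr0)
  rw [hai]
  calc |v r - (r - c/r)| ≤ ε/r := habs
    _ ≤ ε₀ * r⁻¹ := by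
        rw [div_eq_mul_inv]
        exact mul_le_mul_of_nonneg_right hεε₀ (inv_pos.2 hr0).le
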